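/- Let S be a commutative ring, A an n × m matrix over S, and b ∈ S^n. The set of primes p ∈ Spec S such that the linear system A x = b is solvable over the residue field κ(p) is a constructible subset of Spec S. -/

import Mathlib

/-- A subset of a topological space is constructible if it is a finite union of
sets of the form `U ∩ C` with `U` open and `C` closed. -/
def IsConstructibleSet {X : Type*} [TopologicalSpace X] (s : Set X) : Prop :=
  ∃ (k : ℕ) (U C : Fin k → Set X), (∀ i, IsOpen (U i)) ∧ (∀ i, IsClosed (C i)) ∧
    s = ⋃ i, U i ∩ C i

/-- The canonical map from `S` to the residue field of the prime `p`. -/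
noncomputable def resMap {S : Type*} [CommRing S] (p : PrimeSpectrum S) :
    S →+* IsLocalRing.ResidueField (Localization.AtPrime p.asIdeal) :=
  (IsLocalRing.residue _).comp (algebraMap S (Localization.AtPrime p.asIdeal))

section ConstructibleAux

variable {X : Type*} [TopologicalSpace X]

lemma isConstructibleSet_empty : IsConstructibleSet (∅ : Set X) :=
  ⟨0, Fin.elim0, Fin.elim0, fun i => i.elim0, fun i => i.elim0, by simp⟩

lemma isConstructibleSet_open_inter_closed {U C : Set X} (hU : IsOpen U) (hC : IsClosed C) :
    IsConstructibleSet (U ∩ C) :=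
  ⟨1, fun _ => U, fun _ => C, fun _ => hU, fun _ => hC, (Set.iUnion_const _).symm⟩

lemma IsConstructibleSet.union {s t : Set X} (hs : IsConstructibleSet s)
    (ht : IsConstructibleSet t) : IsConstructibleSet (s ∪ t) := by
  obtain ⟨k, U, C, hUo, hCc, rfl⟩ := hs
  obtain ⟨l, V, D, hVo, hDc, rfl⟩ := ht
  refine ⟨k + l, Fin.append U V, Fin.append C D, ?_, ?_, ?_⟩
  · intro i
    induction i using Fin.addCases with
    | left i => simpa using hUo i
    | right i => simpa using hVo i
  · intro i
    induction i using Fin.addCases with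
    | left i => simpa using hCc i
    | right i => simpa using hDc i
  · ext x
    simp only [Set.mem_union, Set.mem_iUnion, Set.mem_inter_iff]
    constructor
    · rintro (⟨i, h1, h2⟩ | ⟨i, h1, h2⟩)
      · exact ⟨Fin.castAdd l i, by simpa using ⟨h1, h2⟩⟩
      · exact ⟨Fin.natAdd k i, by simpa using ⟨h1, h2⟩⟩
    · rintro ⟨i, hi⟩
      induction i using Fin.addCases with
      | left i => simp only [Fin.append_left] at hi; exact Or.inl ⟨i, hi⟩
      | right i => simp only [Fin.append_right] at hi; exact Or.inr ⟨i, hi⟩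

lemma IsConstructibleSet.inter_open {s : Set X} (hs : IsConstructibleSet s) {U : Set X}
    (hU : IsOpen U) : IsConstructibleSet (U ∩ s) := by
  obtain ⟨k, V, C, hVo, hCc, rfl⟩ := hs
  refine ⟨k, fun i => U ∩ V i, C, fun i => hU.inter (hVo i), hCc, ?_⟩
  rw [Set.inter_iUnion]
  simp [Set.inter_assoc]

lemma isConstructibleSet_iUnion {ι : Type*} [Fintype ι] (f : ι → Set X)
    (h : ∀ i, IsConstructibleSet (f i)) : IsConstructibleSet (⋃ i, f i) := by
  classical
  have key : ∀ s : Finset ι, IsConstructibleSet (⋃ i ∈ s, f i) := by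
    intro s
    induction s using Finset.induction with
    | empty => simpa using isConstructibleSet_empty
    | insert _ _ hx ih =>
        rw [Finset.set_biUnion_insert]
        exact (h _).union ih
  simpa using key Finset.univ

end ConstructibleAux

open Matrix in
/-- Gaussian elimination step over a field: if the pivot `M i j` is nonzero, solvability of
`M x = c` is equivalent to solvability of the system obtained by eliminating row `i`. -/
lemma solvable_elim_iff {K : Type*} [Field K] {n m : ℕ}
    (M : Matrix (Fin (n + 1)) (Fin m) K) (c : Fin (n + 1) → K)
    (i : Fin (n + 1)) (j : Fin m) (ha : M i j ≠ 0) :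
    (∃ x, M.mulVec x = c) ↔
    (∃ x, (Matrix.of fun k l =>
        M i j * M (i.succAbove k) l - M (i.succAbove k) j * M i l).mulVec x
      = fun k => M i j * c (i.succAbove k) - M (i.succAbove k) j * c i) := by
  have key : ∀ (y : Fin m → K) (k : Fin n),
      ((Matrix.of fun k l =>
        M i j * M (i.succAbove k) l - M (i.succAbove k) j * M i l).mulVec y) k
      = M i j * (M.mulVec y) (i.succAbove k) - M (i.succAbove k) j * (M.mulVec y) i := by
    intro y k
    simp only [Matrix.mulVec, dotProduct, Matrix.of_apply, sub_mul, mul_assoc,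
      Finset.sum_sub_distrib, Finset.mul_sum]
  constructor
  · rintro ⟨x, hx⟩
    refine ⟨x, funext fun k => ?_⟩
    rw [key, hx]
  · rintro ⟨y, hy⟩
    set t : K := (c i - (M.mulVec y) i) / M i j with ht
    refine ⟨y + t • (Pi.single j 1 : Fin m → K), funext fun r => ?_⟩
    have hcol : M.mulVec (y + t • (Pi.single j 1 : Fin m → K))
        = fun r => (M.mulVec y) r + t * M r j := by
      funext r
      rw [Matrix.mulVec_add, Matrix.mulVec_smul, Matrix.mulVec_single_one]
      simp [mul_comm]
    rw [hcol]
    have hta : M i j * t = c i - (M.mulVec y) i := by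
      rw [ht, mul_div_cancel₀ _ ha]
    rcases eq_or_ne r i with rfl | hr
    · linear_combination hta
    · obtain ⟨k, rfl⟩ := Fin.exists_succAbove_eq hr
      have hk := congrFun hy k
      rw [key] at hk
      refine mul_left_cancel₀ ha ?_
      linear_combination hk + M (i.succAbove k) j * hta

lemma resMap_eq_zero_iff {S : Type*} [CommRing S] (p : PrimeSpectrum S) (s : S) :
    resMap p s = 0 ↔ s ∈ p.asIdeal := by
  rw [resMap, RingHom.comp_apply, IsLocalRing.residue_eq_zero_iff]
  exact IsLocalization.AtPrime.to_map_mem_maximal_iff (Localization.AtPrime p.asIdeal) p.asIdeal s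

/-- For an `n × m` matrix `A` over a commutative ring `S` and `b ∈ Sⁿ`, the set of primes `p`
such that the linear system `A x = b` is solvable over the residue field `κ(p)` is a
constructible subset of `Spec S`. -/
theorem stmt1 {S : Type*} [CommRing S] {n m : ℕ}
    (A : Matrix (Fin n) (Fin m) S) (b : Fin n → S) :
    IsConstructibleSet {p : PrimeSpectrum S |
      ∃ x : Fin m → IsLocalRing.ResidueField (Localization.AtPrime p.asIdeal),
        (A.map (resMap p)).mulVec x = fun i => resMap p (b i)} := by
  classical
  induction n with
  | zero =>
      have huniv : {p : PrimeSpectrum S |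
          ∃ x : Fin m → IsLocalRing.ResidueField (Localization.AtPrime p.asIdeal),
            (A.map (resMap p)).mulVec x = fun i => resMap p (b i)} = Set.univ := by
        ext p
        simp only [Set.mem_setOf_eq, Set.mem_univ, iff_true]
        exact ⟨0, funext fun i => i.elim0⟩
      rw [huniv]
      simpa using isConstructibleSet_open_inter_closed (isOpen_univ (X := PrimeSpectrum S))
        isClosed_univ
  | succ n ih =>
      set Z : Set (PrimeSpectrum S) := PrimeSpectrum.zeroLocus
        ((Set.range fun q : Fin (n + 1) × Fin m => A q.1 q.2) ∪ Set.range b) with hZ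
      set g : Fin (n + 1) × Fin m → Set (PrimeSpectrum S) := fun q =>
        (PrimeSpectrum.zeroLocus {A q.1 q.2})ᶜ ∩
          {p : PrimeSpectrum S |
            ∃ x : Fin m → IsLocalRing.ResidueField (Localization.AtPrime p.asIdeal),
              ((Matrix.of fun k l => A q.1 q.2 * A (q.1.succAbove k) l
                  - A (q.1.succAbove k) q.2 * A q.1 l).map (resMap p)).mulVec x
                = fun k => resMap p (A q.1 q.2 * b (q.1.succAbove k)
                  - A (q.1.succAbove k) q.2 * b q.1)} with hg
      have hset : {p : PrimeSpectrum S |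
          ∃ x : Fin m → IsLocalRing.ResidueField (Localization.AtPrime p.asIdeal),
            (A.map (resMap p)).mulVec x = fun i => resMap p (b i)}
          = (Set.univ ∩ Z) ∪ ⋃ q, g q := by
        ext p
        simp only [Set.mem_setOf_eq, Set.mem_union, Set.mem_iUnion, Set.univ_inter, hZ, hg,
          Set.mem_inter_iff, Set.mem_compl_iff, PrimeSpectrum.mem_zeroLocus,
          Set.union_subset_iff, Set.range_subset_iff, Set.singleton_subset_iff,
          SetLike.mem_coe]
        have key : ∀ (i : Fin (n + 1)) (j : Fin m), A i j ∉ p.asIdeal →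
            ((∃ x, (A.map (resMap p)).mulVec x = fun i => resMap p (b i)) ↔
             (∃ x, ((Matrix.of fun k l => A i j * A (i.succAbove k) l
                  - A (i.succAbove k) j * A i l).map (resMap p)).mulVec x
                = fun k => resMap p (A i j * b (i.succAbove k)
                  - A (i.succAbove k) j * b i))) := by
          intro i j hij
          have ha : (A.map (resMap p)) i j ≠ 0 := by
            simpa [Matrix.map_apply, resMap_eq_zero_iff] using hij
          have hM : ((Matrix.of fun k l => A i j * A (i.succAbove k) l
                - A (i.succAbove k) j * A i l).map (resMap p))
              = Matrix.of fun k l => (A.map (resMap p)) i j * (A.map (resMap p)) (i.succAbove k) l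
                - (A.map (resMap p)) (i.succAbove k) j * (A.map (resMap p)) i l := by
            ext k l
            simp [Matrix.map_apply]
          have hv : (fun k => resMap p (A i j * b (i.succAbove k)
                - A (i.succAbove k) j * b i))
              = fun k => (A.map (resMap p)) i j * resMap p (b (i.succAbove k))
                - (A.map (resMap p)) (i.succAbove k) j * resMap p (b i) := by
            funext k
            simp [Matrix.map_apply]
          rw [hM, hv]
          exact solvable_elim_iff (A.map (resMap p)) (fun i => resMap p (b i)) i j ha
        constructor
        · intro h
          by_cases hA : ∀ q : Fin (n + 1) × Fin m, A q.1 q.2 ∈ p.asIdeal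
          · left
            refine ⟨hA, fun i2 => ?_⟩
            obtain ⟨x, hx⟩ := h
            have h2 := congrFun hx i2
            rw [← resMap_eq_zero_iff p, ← h2]
            simp only [Matrix.mulVec, dotProduct, Matrix.map_apply]
            refine Finset.sum_eq_zero fun l _ => ?_
            rw [(resMap_eq_zero_iff p _).mpr (hA (i2, l)), zero_mul]
          · push_neg at hA
            obtain ⟨⟨i, j⟩, hij⟩ := hA
            exact Or.inr ⟨(i, j), hij, (key i j hij).mp h⟩
        · rintro (⟨hA, hb⟩ | ⟨⟨i, j⟩, hij, hx⟩)
          · refine ⟨0, funext fun i2 => ?_⟩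
            rw [Matrix.mulVec_zero]
            exact (Pi.zero_apply i2).trans ((resMap_eq_zero_iff p _).mpr (hb i2)).symm
          · exact (key i j hij).mpr hx
      rw [hset]
      exact (isConstructibleSet_open_inter_closed isOpen_univ
          (PrimeSpectrum.isClosed_zeroLocus _)).union
        (isConstructibleSet_iUnion g fun q =>
          (ih _ _).inter_open (PrimeSpectrum.isClosed_zeroLocus _).isOpen_compl)
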